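/- (Gap analysis, Case 1: R12 ≥ R21, R13 ≥ R31, R23 ≥ R32.) Suppose the nonnegative rate tuple lies in C̲'_g and additionally R12 ≥ R21, R13 ≥ R31, R23 ≥ R32. Define α32^b = (2^{2R32+1}−1)/(2h3²P), α31^b = 2^{2R32+1}(2^{2R31+1}−1)/(2h3²P), α21^b = 2^{2R31+2R32+2}(2^{2R21+1}−1)/(2h2²P), α23^u = 2^{2R21+2R31+2R32+3}(2^{2(R23−R32)}−1)/(h2²P), α13^u = 2^{2R21+2R31+2R23+3}(2^{2(R13−R31)}−1)/(h1²P), α12^u = 2^{2R21+2R13+2R23+3}(2^{2(R12−R21)}−1)/(h1²P), and α23^b = (h3²/h2²)α32^b, α13^b = (h3²/h1²)α31^b, α12^b = (h2²/h1²)α21^b. Then α31^b+α32^b ≤ 1, α21^b+α23^b+α23^u ≤ 1, α12^b+α13^b+α12^u+α13^u ≤ 1, and (2^{2(R13+R23)}−1)/(h3²P) + 2^{2(R13+R23)}(2^{2R12}−1)/(h2²P) ≤ 1. -/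

import Mathlib

noncomputable def Cg (x : ℝ) : ℝ := (1 / 2) * Real.logb 2 (1 + x)

private lemma cg_expand {x R k : ℝ} (hx : 0 < x) (h : R ≤ Cg x - k) :
    (2:ℝ) ^ (2 * R + 2 * k) ≤ 1 + x := by
  have h1 : 2 * R + 2 * k ≤ Real.logb 2 (1 + x) := by
    unfold Cg at h; linarith
  calc (2:ℝ) ^ (2 * R + 2 * k) ≤ (2:ℝ) ^ Real.logb 2 (1 + x) :=
        Real.rpow_le_rpow_of_exponent_le one_le_two h1
    _ = 1 + x := Real.rpow_logb (by linarith) (by norm_num) (by linarith)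

set_option maxHeartbeats 1000000

theorem stmt_11
    (P h1 h2 h3 : ℝ) (hP : 0 < P)
    (hh12 : h2 ^ 2 ≤ h1 ^ 2) (hh23 : h3 ^ 2 ≤ h2 ^ 2) (hh3 : 0 < h3 ^ 2)
    (R12 R13 R21 R23 R31 R32 : ℝ)
    (hr12 : 0 ≤ R12) (hr13 : 0 ≤ R13) (hr21 : 0 ≤ R21)
    (hr23 : 0 ≤ R23) (hr31 : 0 ≤ R31) (hr32 : 0 ≤ R32)
    (hG1 : R31 + R32 ≤ Cg (h3 ^ 2 * P) - 2)
    (hG2 : R13 + R23 ≤ Cg (h3 ^ 2 * P) - 2)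
    (hG3 : R12 + R13 + R32 ≤ Cg (h2 ^ 2 * P + h3 ^ 2 * P) - 3)
    (hG4 : R13 + R23 + R12 ≤ Cg (h2 ^ 2 * P + h3 ^ 2 * P) - 3)
    (hG5 : R12 + R31 + R32 ≤ Cg (h1 ^ 2 * P + h2 ^ 2 * P) - 3)
    (hG6 : R13 + R23 + R21 ≤ Cg (h1 ^ 2 * P + h3 ^ 2 * P) - 3)
    (hG7 : R21 + R31 + R23 ≤ Cg ((|h2| + |h3|) ^ 2 * P) - 7 / 2)
    (hG8 : R21 + R31 + R32 ≤ Cg ((|h2| + |h3|) ^ 2 * P) - 7 / 2)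
    (hc1 : R21 ≤ R12) (hc2 : R31 ≤ R13) (hc3 : R32 ≤ R23)
    (a32b a31b a21b a23u a13u a12u a23b a13b a12b : ℝ)
    (ha32b : a32b = ((2:ℝ) ^ (2 * R32 + 1) - 1) / (2 * h3 ^ 2 * P))
    (ha31b : a31b = (2:ℝ) ^ (2 * R32 + 1) * ((2:ℝ) ^ (2 * R31 + 1) - 1) / (2 * h3 ^ 2 * P))
    (ha21b : a21b = (2:ℝ) ^ (2 * R31 + 2 * R32 + 2) * ((2:ℝ) ^ (2 * R21 + 1) - 1) / (2 * h2 ^ 2 * P))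
    (ha23u : a23u = (2:ℝ) ^ (2 * R21 + 2 * R31 + 2 * R32 + 3) * ((2:ℝ) ^ (2 * (R23 - R32)) - 1) / (h2 ^ 2 * P))
    (ha13u : a13u = (2:ℝ) ^ (2 * R21 + 2 * R31 + 2 * R23 + 3) * ((2:ℝ) ^ (2 * (R13 - R31)) - 1) / (h1 ^ 2 * P))
    (ha12u : a12u = (2:ℝ) ^ (2 * R21 + 2 * R13 + 2 * R23 + 3) * ((2:ℝ) ^ (2 * (R12 - R21)) - 1) / (h1 ^ 2 * P))
    (ha23b : a23b = h3 ^ 2 / h2 ^ 2 * a32b)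
    (ha13b : a13b = h3 ^ 2 / h1 ^ 2 * a31b)
    (ha12b : a12b = h2 ^ 2 / h1 ^ 2 * a21b) :
    a31b + a32b ≤ 1 ∧
    a21b + a23b + a23u ≤ 1 ∧
    a12b + a13b + a12u + a13u ≤ 1 ∧
    ((2:ℝ) ^ (2 * (R13 + R23)) - 1) / (h3 ^ 2 * P)
      + (2:ℝ) ^ (2 * (R13 + R23)) * ((2:ℝ) ^ (2 * R12) - 1) / (h2 ^ 2 * P) ≤ 1 := by
  have h2p : (0:ℝ) < 2 := by norm_num
  have hh2 : (0:ℝ) < h2 ^ 2 := lt_of_lt_of_le hh3 hh23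
  have hh1 : (0:ℝ) < h1 ^ 2 := lt_of_lt_of_le hh2 hh12
  have h3ne : h3 ≠ 0 := fun h => by simp [h] at hh3
  have h2ne : h2 ≠ 0 := fun h => by simp [h] at hh2
  have h1ne : h1 ≠ 0 := fun h => by simp [h] at hh1
  have hPne : P ≠ 0 := ne_of_gt hP
  have hq3 : (0:ℝ) < h3 ^ 2 * P := mul_pos hh3 hP
  have hq2 : (0:ℝ) < h2 ^ 2 * P := mul_pos hh2 hP
  have hq1 : (0:ℝ) < h1 ^ 2 * P := mul_pos hh1 hP
  have hq32 : h3 ^ 2 * P ≤ h2 ^ 2 * P := mul_le_mul_of_nonneg_right hh23 hP.le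
  have hq21 : h2 ^ 2 * P ≤ h1 ^ 2 * P := mul_le_mul_of_nonneg_right hh12 hP.le
  have habs : (0:ℝ) < (|h2| + |h3|) ^ 2 * P := by
    have h1' : (0:ℝ) < |h3| := abs_pos.mpr h3ne
    have h2' : (0:ℝ) < |h2| + |h3| := by linarith only [abs_nonneg h2, h1']
    positivity
  have p2 : (2:ℝ) ^ (2:ℝ) = 4 := by norm_num
  have p3 : (2:ℝ) ^ (3:ℝ) = 8 := by norm_num
  have p4 : (2:ℝ) ^ (4:ℝ) = 16 := by norm_num
  have p6 : (2:ℝ) ^ (6:ℝ) = 64 := by norm_num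
  have p7 : (2:ℝ) ^ (7:ℝ) = 128 := by norm_num
  have pA : (0:ℝ) < ((2:ℝ) ^ (2 * R21)) := Real.rpow_pos_of_pos h2p _
  have pB : (0:ℝ) < ((2:ℝ) ^ (2 * R31)) := Real.rpow_pos_of_pos h2p _
  have pC : (0:ℝ) < ((2:ℝ) ^ (2 * R32)) := Real.rpow_pos_of_pos h2p _
  have pD : (0:ℝ) < ((2:ℝ) ^ (2 * R23)) := Real.rpow_pos_of_pos h2p _
  have pE : (0:ℝ) < ((2:ℝ) ^ (2 * R13)) := Real.rpow_pos_of_pos h2p _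
  have pF : (0:ℝ) < ((2:ℝ) ^ (2 * R12)) := Real.rpow_pos_of_pos h2p _
  have neC : ((2:ℝ) ^ (2 * R32)) ≠ 0 := pC.ne'
  have neB : ((2:ℝ) ^ (2 * R31)) ≠ 0 := pB.ne'
  have neA : ((2:ℝ) ^ (2 * R21)) ≠ 0 := pA.ne'
  have one_le : ∀ y : ℝ, 0 ≤ y → (1:ℝ) ≤ (2:ℝ) ^ y := by
    intro y hy
    calc (1:ℝ) = (2:ℝ) ^ (0:ℝ) := (Real.rpow_zero 2).symm
      _ ≤ (2:ℝ) ^ y := Real.rpow_le_rpow_of_exponent_le one_le_two hy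
  have gA : (1:ℝ) ≤ ((2:ℝ) ^ (2 * R21)) := one_le _ (by linarith only [hr21])
  have gB : (1:ℝ) ≤ ((2:ℝ) ^ (2 * R31)) := one_le _ (by linarith only [hr31])
  have gC : (1:ℝ) ≤ ((2:ℝ) ^ (2 * R32)) := one_le _ (by linarith only [hr32])
  have gD : (1:ℝ) ≤ ((2:ℝ) ^ (2 * R23)) := one_le _ (by linarith only [hr23])
  have gE : (1:ℝ) ≤ ((2:ℝ) ^ (2 * R13)) := one_le _ (by linarith only [hr13])
  have gF : (1:ℝ) ≤ ((2:ℝ) ^ (2 * R12)) := one_le _ (by linarith only [hr12])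
  have hCD : ((2:ℝ) ^ (2 * R32)) ≤ ((2:ℝ) ^ (2 * R23)) := Real.rpow_le_rpow_of_exponent_le one_le_two (by linarith only [hc3])
  have E1 : 16 * (((2:ℝ) ^ (2 * R31)) * ((2:ℝ) ^ (2 * R32))) ≤ 1 + h3 ^ 2 * P := by
    have h := cg_expand (x := h3 ^ 2 * P) hq3 hG1
    rw [show 2 * (R31 + R32) + 2 * (2:ℝ) = 2 * R31 + (2 * R32 + 4) by ring,
      Real.rpow_add h2p, Real.rpow_add h2p, p4] at h
    linarith only [h]
  have E2 : 16 * (((2:ℝ) ^ (2 * R13)) * ((2:ℝ) ^ (2 * R23))) ≤ 1 + h3 ^ 2 * P := by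
    have h := cg_expand (x := h3 ^ 2 * P) hq3 hG2
    rw [show 2 * (R13 + R23) + 2 * (2:ℝ) = 2 * R13 + (2 * R23 + 4) by ring,
      Real.rpow_add h2p, Real.rpow_add h2p, p4] at h
    linarith only [h]
  have E4 : 64 * (((2:ℝ) ^ (2 * R13)) * ((2:ℝ) ^ (2 * R23)) * ((2:ℝ) ^ (2 * R12))) ≤ 1 + (h2 ^ 2 * P + h3 ^ 2 * P) := by
    have h := cg_expand (x := h2 ^ 2 * P + h3 ^ 2 * P) (by linarith only [hq2, hq3]) hG4
    rw [show 2 * (R13 + R23 + R12) + 2 * (3:ℝ) = 2 * R13 + (2 * R23 + (2 * R12 + 6)) by ring,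
      Real.rpow_add h2p, Real.rpow_add h2p, Real.rpow_add h2p, p6] at h
    linarith only [h]
  have E7 : 128 * (((2:ℝ) ^ (2 * R21)) * ((2:ℝ) ^ (2 * R31)) * ((2:ℝ) ^ (2 * R23))) ≤ 1 + (|h2| + |h3|) ^ 2 * P := by
    have h := cg_expand (x := (|h2| + |h3|) ^ 2 * P) habs hG7
    rw [show 2 * (R21 + R31 + R23) + 2 * (7 / 2 : ℝ) = 2 * R21 + (2 * R31 + (2 * R23 + 7)) by ring,
      Real.rpow_add h2p, Real.rpow_add h2p, Real.rpow_add h2p, p7] at h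
    linarith only [h]
  have habs2 : (|h2| + |h3|) ^ 2 * P ≤ 4 * (h2 ^ 2 * P) := by
    have h32 : |h3| ≤ |h2| := by
      rw [← Real.sqrt_sq_eq_abs, ← Real.sqrt_sq_eq_abs]
      exact Real.sqrt_le_sqrt hh23
    have hsq : (|h2| + |h3|) ^ 2 ≤ 4 * h2 ^ 2 := by
      nlinarith only [sq_abs h2, sq_abs h3, abs_nonneg h2, abs_nonneg h3, h32]
    nlinarith only [hP.le, hsq]
  have hq3big : (15:ℝ) ≤ h3 ^ 2 * P := by nlinarith only [E1, gB, gC]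
  have A32 : a32b = (2 * ((2:ℝ) ^ (2 * R32)) - 1) / (2 * h3 ^ 2 * P) := by
    rw [ha32b, Real.rpow_add h2p, Real.rpow_one]
    ring
  have A31 : a31b = (4 * (((2:ℝ) ^ (2 * R31)) * ((2:ℝ) ^ (2 * R32))) - 2 * ((2:ℝ) ^ (2 * R32))) / (2 * h3 ^ 2 * P) := by
    rw [ha31b, Real.rpow_add h2p, Real.rpow_one, Real.rpow_add h2p, Real.rpow_one]
    ring
  have A21 : a21b = (8 * (((2:ℝ) ^ (2 * R21)) * ((2:ℝ) ^ (2 * R31)) * ((2:ℝ) ^ (2 * R32))) - 4 * (((2:ℝ) ^ (2 * R31)) * ((2:ℝ) ^ (2 * R32)))) / (2 * h2 ^ 2 * P) := by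
    rw [ha21b, show 2 * R31 + 2 * R32 + (2:ℝ) = 2 * R31 + (2 * R32 + 2) by ring,
      Real.rpow_add h2p, Real.rpow_add h2p, p2, Real.rpow_add h2p, Real.rpow_one]
    ring
  have A23b : a23b = (2 * ((2:ℝ) ^ (2 * R32)) - 1) / (2 * h2 ^ 2 * P) := by
    rw [ha23b, A32]
    field_simp
  have A23u : a23u = (16 * (((2:ℝ) ^ (2 * R21)) * ((2:ℝ) ^ (2 * R31)) * ((2:ℝ) ^ (2 * R23))) - 16 * (((2:ℝ) ^ (2 * R21)) * ((2:ℝ) ^ (2 * R31)) * ((2:ℝ) ^ (2 * R32)))) / (2 * h2 ^ 2 * P) := by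
    rw [ha23u, show 2 * (R23 - R32) = 2 * R23 - 2 * R32 by ring, Real.rpow_sub h2p,
      show 2 * R21 + 2 * R31 + 2 * R32 + (3:ℝ) = 2 * R21 + (2 * R31 + (2 * R32 + 3)) by ring,
      Real.rpow_add h2p, Real.rpow_add h2p, Real.rpow_add h2p, p3]
    field_simp
    ring
  have A13b : a13b = (4 * (((2:ℝ) ^ (2 * R31)) * ((2:ℝ) ^ (2 * R32))) - 2 * ((2:ℝ) ^ (2 * R32))) / (2 * h1 ^ 2 * P) := by
    rw [ha13b, A31]
    field_simp
  have A12b : a12b = (8 * (((2:ℝ) ^ (2 * R21)) * ((2:ℝ) ^ (2 * R31)) * ((2:ℝ) ^ (2 * R32))) - 4 * (((2:ℝ) ^ (2 * R31)) * ((2:ℝ) ^ (2 * R32)))) / (2 * h1 ^ 2 * P) := by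
    rw [ha12b, A21]
    field_simp
  have A13u : a13u = (16 * (((2:ℝ) ^ (2 * R21)) * ((2:ℝ) ^ (2 * R23)) * ((2:ℝ) ^ (2 * R13))) - 16 * (((2:ℝ) ^ (2 * R21)) * ((2:ℝ) ^ (2 * R31)) * ((2:ℝ) ^ (2 * R23)))) / (2 * h1 ^ 2 * P) := by
    rw [ha13u, show 2 * (R13 - R31) = 2 * R13 - 2 * R31 by ring, Real.rpow_sub h2p,
      show 2 * R21 + 2 * R31 + 2 * R23 + (3:ℝ) = 2 * R21 + (2 * R31 + (2 * R23 + 3)) by ring,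
      Real.rpow_add h2p, Real.rpow_add h2p, Real.rpow_add h2p, p3]
    field_simp
    ring
  have A12u : a12u = (16 * (((2:ℝ) ^ (2 * R23)) * ((2:ℝ) ^ (2 * R13)) * ((2:ℝ) ^ (2 * R12))) - 16 * (((2:ℝ) ^ (2 * R21)) * ((2:ℝ) ^ (2 * R23)) * ((2:ℝ) ^ (2 * R13)))) / (2 * h1 ^ 2 * P) := by
    rw [ha12u, show 2 * (R12 - R21) = 2 * R12 - 2 * R21 by ring, Real.rpow_sub h2p,
      show 2 * R21 + 2 * R13 + 2 * R23 + (3:ℝ) = 2 * R21 + (2 * R13 + (2 * R23 + 3)) by ring,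
      Real.rpow_add h2p, Real.rpow_add h2p, Real.rpow_add h2p, p3]
    field_simp
    ring
  have h2q3 : (0:ℝ) < 2 * h3 ^ 2 * P := by linarith only [hq3]
  have h2q2 : (0:ℝ) < 2 * h2 ^ 2 * P := by linarith only [hq2]
  have h2q1 : (0:ℝ) < 2 * h1 ^ 2 * P := by linarith only [hq1]
  have hAB : (1:ℝ) ≤ ((2:ℝ) ^ (2 * R21)) * ((2:ℝ) ^ (2 * R31)) := by nlinarith only [gA, gB]
  have hBC : (1:ℝ) ≤ ((2:ℝ) ^ (2 * R31)) * ((2:ℝ) ^ (2 * R32)) := by nlinarith only [gB, gC]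
  have hED : (1:ℝ) ≤ ((2:ℝ) ^ (2 * R13)) * ((2:ℝ) ^ (2 * R23)) := by nlinarith only [gE, gD]
  have hABc : ((2:ℝ) ^ (2 * R32)) ≤ ((2:ℝ) ^ (2 * R21)) * ((2:ℝ) ^ (2 * R31)) * ((2:ℝ) ^ (2 * R32)) := by nlinarith only [hAB, pC]
  have hABD : (1:ℝ) ≤ ((2:ℝ) ^ (2 * R21)) * ((2:ℝ) ^ (2 * R31)) * ((2:ℝ) ^ (2 * R23)) := by nlinarith only [hAB, gD]
  have hABCD : ((2:ℝ) ^ (2 * R21)) * ((2:ℝ) ^ (2 * R31)) * ((2:ℝ) ^ (2 * R32)) ≤ ((2:ℝ) ^ (2 * R21)) * ((2:ℝ) ^ (2 * R31)) * ((2:ℝ) ^ (2 * R23)) := by nlinarith only [mul_pos pA pB, hCD]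
  refine ⟨?_, ?_, ?_, ?_⟩
  · rw [A31, A32, ← add_div, div_le_one h2q3]
    linarith only [E1, hq3]
  · rw [A21, A23b, A23u, ← add_div, ← add_div, div_le_one h2q2]
    linarith only [E7, habs2, hABc, hBC, gC, hq2]
  · rw [A12b, A13b, A12u, A13u, ← add_div, ← add_div, ← add_div,
      div_le_one h2q1]
    linarith only [E4, hq32, hq21, hABCD, hABD, gC, hq1]
  · rw [show 2 * (R13 + R23) = 2 * R13 + 2 * R23 by ring, Real.rpow_add h2p]
    have t1 : (((2:ℝ) ^ (2 * R13)) * ((2:ℝ) ^ (2 * R23)) - 1) / (h3 ^ 2 * P) ≤ 1 / 2 := by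
      rw [div_le_iff₀ hq3]
      linarith only [E2, hq3]
    have t2 : ((2:ℝ) ^ (2 * R13)) * ((2:ℝ) ^ (2 * R23)) * (((2:ℝ) ^ (2 * R12)) - 1) / (h2 ^ 2 * P) ≤ 1 / 2 := by
      rw [div_le_iff₀ hq2]
      linarith only [E4, hq32, hED, hq2]
    linarith only [t1, t2]
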